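/- Let A be a Noetherian ring and J a two-sided ideal of A. If the Rees ring A + Jt + J²t² + ⋯ ⊆ A[t] (t a central indeterminate) is Noetherian, then J satisfies the weak Artin–Rees property: for every finitely generated left A-module M and every submodule N ⊆ M there exists n > 0 with JⁿM ∩ N ⊆ JN. -/

import Mathlib

namespace ARtest
variable {A : Type} [Ring A] {M : Type} [AddCommGroup M] [Module A M]

noncomputable def shiftE : AddMonoid.End (ℕ →₀ M) := Finsupp.mapDomain.addMonoidHom Nat.succ

lemma shiftE_single (j : ℕ) (m : M) :
    (shiftE (Finsupp.single j m) : ℕ →₀ M) = Finsupp.single (j + 1) m := by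
  show Finsupp.mapDomain.addMonoidHom Nat.succ (Finsupp.single j m) = _
  rw [Finsupp.mapDomain.addMonoidHom_apply, Finsupp.mapDomain_single]

lemma mapRangeSmul_apply (a : A) (f : ℕ →₀ M) (n : ℕ) :
    ((Finsupp.mapRange.addMonoidHom (DistribSMul.toAddMonoidHom M a)) f) n = a • f n := by
  rw [Finsupp.mapRange.addMonoidHom_apply, Finsupp.mapRange_apply,
    DistribSMul.toAddMonoidHom_apply]

noncomputable def scalE : A →+* AddMonoid.End (ℕ →₀ M) where
  toFun a := Finsupp.mapRange.addMonoidHom (DistribSMul.toAddMonoidHom M a)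
  map_one' := DFunLike.ext _ _ fun f => Finsupp.ext fun n => by
    change (1:A) • f n = f n; rw [one_smul]
  map_mul' a b := DFunLike.ext _ _ fun f => Finsupp.ext fun n => by
    change (a * b) • f n = a • b • f n; rw [mul_smul]
  map_zero' := DFunLike.ext _ _ fun f => Finsupp.ext fun n => by
    change (0:A) • f n = (0 : ℕ →₀ M) n; rw [zero_smul]; rfl
  map_add' a b := DFunLike.ext _ _ fun f => Finsupp.ext fun n => by
    change (a + b) • f n = a • f n + b • f n; rw [add_smul]

lemma scalE_apply (a : A) (f : ℕ →₀ M) (n : ℕ) : (scalE a f : ℕ →₀ M) n = a • f n :=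
  mapRangeSmul_apply a f n

lemma scalE_single (a : A) (j : ℕ) (m : M) :
    (scalE a (Finsupp.single j m) : ℕ →₀ M) = Finsupp.single j (a • m) := by
  ext n
  rw [scalE_apply]
  by_cases h : n = j <;> simp [Finsupp.single_apply, h]

lemma scalE_shiftE_comm (a : A) : Commute (scalE a) (shiftE : AddMonoid.End (ℕ →₀ M)) := by
  apply Finsupp.addHom_ext
  intro j m
  show scalE a (shiftE (Finsupp.single j m)) = shiftE (scalE a (Finsupp.single j m))
  rw [shiftE_single, scalE_single, scalE_single, shiftE_single]

/-- the action of `A[t]` on `ℕ →₀ M` -/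
noncomputable def phiE : Polynomial A →+* AddMonoid.End (ℕ →₀ M) :=
  Polynomial.eval₂RingHom' scalE shiftE scalE_shiftE_comm

noncomputable def pMod : Module (Polynomial A) (ℕ →₀ M) where
  smul p f := phiE p f
  one_smul f := by show phiE 1 f = f; rw [map_one, AddMonoid.End.one_apply]
  mul_smul p q f := by
    show phiE (p * q) f = phiE p (phiE q f)
    rw [map_mul, AddMonoid.End.coe_mul]; rfl
  smul_zero p := map_zero (phiE p)
  smul_add p f g := map_add (phiE p) f g
  add_smul p q f := by
    show phiE (p + q) f = phiE p f + phiE q f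
    rw [map_add]; rfl
  zero_smul f := by show phiE 0 f = 0; rw [map_zero, AddMonoid.End.zero_apply]

lemma shiftE_pow_single (i k : ℕ) (m : M) :
    (shiftE ^ i : AddMonoid.End (ℕ →₀ M)) (Finsupp.single k m) = Finsupp.single (k + i) m := by
  induction i generalizing k with
  | zero => rw [pow_zero, AddMonoid.End.one_apply, add_zero]
  | succ i ih =>
      rw [pow_succ', AddMonoid.End.coe_mul, Function.comp_apply]
      show shiftE ((shiftE ^ i) (Finsupp.single k m)) = _
      rw [ih, shiftE_single, add_assoc]

lemma phiE_monomial_single (i : ℕ) (a : A) (j : ℕ) (m : M) :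
    (phiE (Polynomial.monomial i a) (Finsupp.single j m) : ℕ →₀ M)
      = Finsupp.single (i + j) (a • m) := by
  have h : phiE (M := M) (Polynomial.monomial i a) = scalE a * shiftE ^ i := by
    show Polynomial.eval₂ scalE shiftE (Polynomial.monomial i a) = _
    rw [Polynomial.eval₂_monomial]
  rw [h, AddMonoid.End.coe_mul, Function.comp_apply, shiftE_pow_single, scalE_single, add_comm j i]

end ARtest

namespace ARtest
variable {A : Type} [Ring A] {M : Type} [AddCommGroup M] [Module A M]

lemma endSum_apply {ι G : Type*} [AddCommMonoid G] (s : Finset ι) (F : ι → AddMonoid.End G)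
    (x : G) : (∑ i ∈ s, F i) x = ∑ i ∈ s, F i x := by
  classical
  induction s using Finset.induction_on with
  | empty => simp [AddMonoid.End.zero_apply]
  | insert _ _ h ih =>
      rw [Finset.sum_insert h, Finset.sum_insert h, ← ih]; rfl

/-- The key stability lemma: if the coefficients of `p` lie in the `Jpow` filtration and the
coefficients of `f` lie in the filtration `D`, compatibly, then so do those of `p • f`. -/
lemma key (Jpow : ℕ → Ideal A) (D : ℕ → Submodule A M)
    (hstab : ∀ i j a x, a ∈ Jpow i → x ∈ D j → a • x ∈ D (i + j))
    (p : Polynomial A) (hp : ∀ i, p.coeff i ∈ Jpow i)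
    (f : ℕ →₀ M) (hf : ∀ j, f j ∈ D j) (n : ℕ) :
    (phiE p f : ℕ →₀ M) n ∈ D n := by
  have hmono : ∀ i a, a ∈ Jpow i → ∀ n, (phiE (Polynomial.monomial i a) f : ℕ →₀ M) n ∈ D n := by
    intro i a ha n
    rw [← Finsupp.sum_single f]
    rw [Finsupp.sum, map_sum, Finsupp.finset_sum_apply]
    apply Submodule.sum_mem
    intro j hj
    rw [phiE_monomial_single, Finsupp.single_apply]
    split
    · next h => exact h ▸ hstab i j a (f j) ha (hf j)
    · exact zero_mem _
  rw [Polynomial.as_sum_support p]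
  rw [map_sum, endSum_apply, Finsupp.finset_sum_apply]
  exact Submodule.sum_mem _ fun i _ => hmono i (p.coeff i) (hp i) n

noncomputable instance : Module (Polynomial A) (ℕ →₀ M) := pMod

noncomputable instance (R : Subring (Polynomial A)) : Module ↥R (ℕ →₀ M) :=
  Module.compHom _ R.subtype

lemma rsmul_def {R : Subring (Polynomial A)} (r : ↥R) (f : ℕ →₀ M) :
    r • f = phiE (r : Polynomial A) f := rfl

/-- The graded submodule of `ℕ →₀ M` determined by a filtration `D`. -/
noncomputable def W (R : Subring (Polynomial A)) (Jpow : ℕ → Ideal A)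
    (hR : ∀ p : Polynomial A, p ∈ R → ∀ i, p.coeff i ∈ Jpow i)
    (D : ℕ → Submodule A M)
    (hstab : ∀ i j a x, a ∈ Jpow i → x ∈ D j → a • x ∈ D (i + j)) :
    Submodule ↥R (ℕ →₀ M) where
  carrier := {f | ∀ n, f n ∈ D n}
  add_mem' hf hg n := by rw [Finsupp.add_apply]; exact add_mem (hf n) (hg n)
  zero_mem' n := by rw [Finsupp.coe_zero, Pi.zero_apply]; exact zero_mem _
  smul_mem' r f hf n := by
    rw [rsmul_def]
    exact key Jpow D hstab _ (hR _ r.2) f hf n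

lemma mem_W {R : Subring (Polynomial A)} {Jpow : ℕ → Ideal A}
    {hR : ∀ p : Polynomial A, p ∈ R → ∀ i, p.coeff i ∈ Jpow i}
    {D : ℕ → Submodule A M}
    {hstab : ∀ i j a x, a ∈ Jpow i → x ∈ D j → a • x ∈ D (i + j)} {f : ℕ →₀ M} :
    f ∈ W R Jpow hR D hstab ↔ ∀ n, f n ∈ D n := Iff.rfl

end ARtest

namespace ARtest
variable {A : Type} [Ring A] {M : Type} [AddCommGroup M] [Module A M]

lemma jmul {Jpow : ℕ → Ideal A} {J : Ideal A} (hJ0 : Jpow 0 = ⊤)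
    (hJsucc : ∀ m : ℕ, Jpow (m + 1) =
      Submodule.span A {x : A | ∃ a ∈ J, ∃ b ∈ Jpow m, x = a * b}) :
    ∀ i j (a b : A), a ∈ Jpow i → b ∈ Jpow j → a * b ∈ Jpow (i + j) := by
  intro i
  induction i with
  | zero =>
      intro j a b _ hb
      rw [zero_add]
      exact (Jpow j).smul_mem a hb
  | succ i ih =>
      intro j a b ha hb
      rw [hJsucc i] at ha
      rw [show i + 1 + j = i + j + 1 from by omega]
      induction ha using Submodule.span_induction with
      | mem x hx =>
          obtain ⟨c, hc, d, hd, rfl⟩ := hx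
          rw [mul_assoc, hJsucc (i + j)]
          exact Submodule.subset_span ⟨c, hc, d * b, ih j d b hd hb, rfl⟩
      | zero => rw [zero_mul]; exact zero_mem _
      | add x y _ _ hx hy => rw [add_mul]; exact add_mem hx hy
      | smul c x _ hx =>
          rw [smul_eq_mul, mul_assoc]
          exact (Jpow (i + j + 1)).smul_mem c hx

lemma jright {Jpow : ℕ → Ideal A} {J : Ideal A} (hJ0 : Jpow 0 = ⊤)
    (hJsucc : ∀ m : ℕ, Jpow (m + 1) =
      Submodule.span A {x : A | ∃ a ∈ J, ∃ b ∈ Jpow m, x = a * b}) :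
    ∀ i (a c : A), a ∈ Jpow i → a * c ∈ Jpow i := by
  intro i a c ha
  have := jmul hJ0 hJsucc i 0 a c ha (by rw [hJ0]; trivial)
  rwa [add_zero] at this

lemma jle {Jpow : ℕ → Ideal A} {J : Ideal A} (hJ2 : ∀ a ∈ J, ∀ b : A, a * b ∈ J)
    (hJsucc : ∀ m : ℕ, Jpow (m + 1) =
      Submodule.span A {x : A | ∃ a ∈ J, ∃ b ∈ Jpow m, x = a * b}) :
    ∀ i, Jpow (i + 1) ≤ J := by
  intro i
  rw [hJsucc i]
  apply Submodule.span_le.2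
  rintro _ ⟨a, ha, b, _, rfl⟩
  exact hJ2 a ha b

end ARtest

namespace ARtest
variable {A : Type} [Ring A] {M : Type} [AddCommGroup M] [Module A M]

/-- `JMod Jpow n = Jⁿ·M`. -/
noncomputable def JMod (Jpow : ℕ → Ideal A) (n : ℕ) : Submodule A M :=
  Submodule.span A {y : M | ∃ a ∈ Jpow n, ∃ m : M, y = a • m}

lemma smul_mem_JMod {Jpow : ℕ → Ideal A} {i : ℕ} {a : A} (ha : a ∈ Jpow i) (m : M) :
    a • m ∈ JMod (M := M) Jpow i :=
  Submodule.subset_span ⟨a, ha, m, rfl⟩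

lemma JMod_stab {Jpow : ℕ → Ideal A} {J : Ideal A} (hJ0 : Jpow 0 = ⊤)
    (hJsucc : ∀ m : ℕ, Jpow (m + 1) =
      Submodule.span A {x : A | ∃ a ∈ J, ∃ b ∈ Jpow m, x = a * b}) :
    ∀ i j (a : A) (x : M), a ∈ Jpow i → x ∈ JMod Jpow j → a • x ∈ JMod Jpow (i + j) := by
  intro i j a x ha hx
  have key : ∀ x : M, x ∈ JMod (M := M) Jpow j →
      ∀ a : A, a ∈ Jpow i → a • x ∈ JMod (M := M) Jpow (i + j) := by
    intro x hx
    induction hx using Submodule.span_induction with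
    | mem y hy =>
        intro a ha
        obtain ⟨b, hb, m, rfl⟩ := hy
        rw [smul_smul]
        exact smul_mem_JMod (jmul hJ0 hJsucc i j a b ha hb) m
    | zero => intro a _; rw [smul_zero]; exact zero_mem _
    | add y z _ _ hy hz => intro a ha; rw [smul_add]; exact add_mem (hy a ha) (hz a ha)
    | smul c y _ hy =>
        intro a ha
        rw [smul_smul]
        exact hy (a * c) (jright hJ0 hJsucc i a c ha)
  exact key x hx a ha

lemma monomial_mem_R {Jpow : ℕ → Ideal A} {R : Subring (Polynomial A)}
    (hR : ∀ p : Polynomial A, p ∈ R ↔ ∀ i : ℕ, p.coeff i ∈ Jpow i)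
    {i : ℕ} {a : A} (ha : a ∈ Jpow i) : Polynomial.monomial i a ∈ R := by
  rw [hR]
  intro j
  rw [Polynomial.coeff_monomial]
  split
  · next h => exact h ▸ ha
  · exact zero_mem _

lemma subtype_smul_single {R : Subring (Polynomial A)} {i : ℕ} {a : A}
    (h : Polynomial.monomial i a ∈ R) (j : ℕ) (m : M) :
    (⟨Polynomial.monomial i a, h⟩ : ↥R) • Finsupp.single j m = Finsupp.single (i + j) (a • m) := by
  rw [rsmul_def]
  exact phiE_monomial_single i a j m

end ARtest

namespace ARtest
variable {A : Type} [Ring A] {M : Type} [AddCommGroup M] [Module A M]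

lemma single_mem_span {Jpow : ℕ → Ideal A} {R : Subring (Polynomial A)}
    (hR : ∀ p : Polynomial A, p ∈ R ↔ ∀ i : ℕ, p.coeff i ∈ Jpow i) (hJ0 : Jpow 0 = ⊤)
    (s : Set M) (hs : Submodule.span A s = ⊤) :
    ∀ j (x : M), x ∈ JMod (M := M) Jpow j →
      Finsupp.single j x ∈ Submodule.span ↥R (Finsupp.single (M := M) 0 '' s) := by
  have hC : ∀ c : A, Polynomial.monomial 0 c ∈ R :=
    fun c => monomial_mem_R hR (by rw [hJ0]; trivial)
  have step0 : ∀ m : M, Finsupp.single 0 m ∈ Submodule.span ↥R (Finsupp.single (M := M) 0 '' s) := by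
    intro m
    have hm : m ∈ Submodule.span A s := by rw [hs]; trivial
    induction hm using Submodule.span_induction with
    | mem y hy => exact Submodule.subset_span ⟨y, hy, rfl⟩
    | zero => rw [Finsupp.single_zero]; exact zero_mem _
    | add y z _ _ hy hz => rw [Finsupp.single_add]; exact add_mem hy hz
    | smul c y _ hy =>
        have := Submodule.smul_mem _ (⟨Polynomial.monomial 0 c, hC c⟩ : ↥R) hy
        rwa [subtype_smul_single, zero_add] at this
  intro j x hx
  induction hx using Submodule.span_induction with
  | mem y hy =>
      obtain ⟨a, ha, m, rfl⟩ := hy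
      have := Submodule.smul_mem _
        (⟨Polynomial.monomial j a, monomial_mem_R hR ha⟩ : ↥R) (step0 m)
      rwa [subtype_smul_single, add_zero] at this
  | zero => rw [Finsupp.single_zero]; exact zero_mem _
  | add y z _ _ hy hz => rw [Finsupp.single_add]; exact add_mem hy hz
  | smul c y _ hy =>
      have := Submodule.smul_mem _ (⟨Polynomial.monomial 0 c, hC c⟩ : ↥R) hy
      rwa [subtype_smul_single, zero_add] at this

lemma W_JM_fg {Jpow : ℕ → Ideal A} {J : Ideal A} {R : Subring (Polynomial A)}
    (hR : ∀ p : Polynomial A, p ∈ R ↔ ∀ i : ℕ, p.coeff i ∈ Jpow i) (hJ0 : Jpow 0 = ⊤)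
    (hJsucc : ∀ m : ℕ, Jpow (m + 1) =
      Submodule.span A {x : A | ∃ a ∈ J, ∃ b ∈ Jpow m, x = a * b})
    (hfin : Module.Finite A M) :
    (W (M := M) R Jpow (fun p hp => (hR p).1 hp) (JMod Jpow) (JMod_stab hJ0 hJsucc)).FG := by
  classical
  obtain ⟨s, hs⟩ := hfin.fg_top
  refine ⟨s.image (fun m : M => Finsupp.single 0 m), le_antisymm ?_ ?_⟩
  · apply Submodule.span_le.2
    intro g hg
    rw [Finset.coe_image] at hg
    obtain ⟨m, _, rfl⟩ := hg
    intro j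
    rw [Finsupp.single_apply]
    split
    · next h =>
        subst h
        have h1 : (1 : A) • m ∈ JMod (M := M) Jpow 0 :=
          smul_mem_JMod (by rw [hJ0]; trivial) m
        rwa [one_smul] at h1
    · exact zero_mem _
  · intro f hf
    rw [← Finsupp.sum_single f, Finsupp.sum]
    apply Submodule.sum_mem
    intro j _
    have h2 := single_mem_span hR hJ0 (↑s) hs j (f j) (hf j)
    rw [Finset.coe_image]
    exact h2
end ARtest

open ARtest in
/-- noncommutative Artin–Rees: Let `A` be a (left) Noetherian ring and `J` a
two-sided ideal of `A`, with powers `Jⁿ` (`J⁰ = A`, `J^{n+1} = J·Jⁿ`).  If the Rees ring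
`A + Jt + J²t² + ⋯ ⊆ A[t]` is (left) Noetherian, then `J` satisfies the weak Artin–Rees
property: for every finitely generated left `A`-module `M` and every submodule `N ⊆ M` there
is `n > 0` with `JⁿM ∩ N ⊆ JN`. -/
theorem stmt_3 (A : Type) [Ring A] [IsNoetherianRing A]
    (J : Ideal A) (hJ2 : ∀ a ∈ J, ∀ b : A, a * b ∈ J)
    -- the powers of the two-sided ideal `J`
    (Jpow : ℕ → Ideal A)
    (hJ0 : Jpow 0 = ⊤)
    (hJsucc : ∀ m : ℕ, Jpow (m + 1) =
      Submodule.span A {x : A | ∃ a ∈ J, ∃ b ∈ Jpow m, x = a * b})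
    -- the Rees ring `R = ⊕ₙ Jⁿ tⁿ ⊆ A[t]`
    (R : Subring (Polynomial A))
    (hR : ∀ p : Polynomial A, p ∈ R ↔ ∀ i : ℕ, p.coeff i ∈ Jpow i)
    (hNoeth : IsNoetherianRing ↥R) :
    ∀ (M : Type) [AddCommGroup M] [Module A M], Module.Finite A M →
      ∀ N : Submodule A M, ∃ n : ℕ, 0 < n ∧
        Submodule.span A {y : M | ∃ a ∈ Jpow n, ∃ m : M, y = a • m} ⊓ N ≤
          Submodule.span A {y : M | ∃ a ∈ J, ∃ m ∈ N, y = a • m} := by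
  intro M _ _ hfin N
  classical
  have hR1 : ∀ p : Polynomial A, p ∈ R → ∀ i : ℕ, p.coeff i ∈ Jpow i :=
    fun p hp => (hR p).1 hp
  set JN : Submodule A M := Submodule.span A {y : M | ∃ a ∈ J, ∃ m ∈ N, y = a • m} with hJN
  let Mstar : Submodule ↥R (ℕ →₀ M) :=
    W (M := M) R Jpow hR1 (JMod Jpow) (JMod_stab hJ0 hJsucc)
  have hstabN : ∀ i j (a : A) (x : M), a ∈ Jpow i →
      x ∈ (JMod Jpow j ⊓ N : Submodule A M) → a • x ∈ (JMod Jpow (i + j) ⊓ N : Submodule A M) :=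
    fun i j a x ha hx => ⟨JMod_stab hJ0 hJsucc i j a x ha hx.1, N.smul_mem a hx.2⟩
  let Nstar : Submodule ↥R (ℕ →₀ M) :=
    W (M := M) R Jpow hR1 (fun j => JMod Jpow j ⊓ N) hstabN
  have hNle : Nstar ≤ Mstar := fun f hf => fun n => ((mem_W.1 hf) n).1
  haveI := hNoeth
  haveI : IsNoetherian ↥R ↥Mstar :=
    isNoetherian_of_fg_of_noetherian _ (W_JM_fg hR hJ0 hJsucc hfin)
  have hNfg : Nstar.FG := by
    have h1 : (Nstar.comap Mstar.subtype).FG := IsNoetherian.noetherian _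
    have h2 : (Nstar.comap Mstar.subtype).map Mstar.subtype = Nstar := by
      rw [Submodule.map_comap_subtype]; exact inf_eq_right.2 hNle
    rw [← h2]; exact h1.map _
  obtain ⟨S, hS⟩ := hNfg
  set k := S.sup (fun g => g.support.sup id) with hk
  refine ⟨k + 1, Nat.succ_pos k, ?_⟩
  have hstabT : ∀ i j (a : A) (x : M), a ∈ Jpow i →
      x ∈ ((JMod Jpow j ⊓ N) ⊓ (if j = k + 1 then JN else ⊤) : Submodule A M) →
      a • x ∈ ((JMod Jpow (i + j) ⊓ N) ⊓ (if i + j = k + 1 then JN else ⊤) : Submodule A M) := by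
    intro i j a x ha hx
    refine ⟨hstabN i j a x ha hx.1, ?_⟩
    split
    · next hij =>
        cases i with
        | zero =>
            have hj : j = k + 1 := by omega
            have hx2 : x ∈ JN := by
              have h3 := hx.2
              rw [if_pos hj] at h3
              exact h3
            exact JN.smul_mem a hx2
        | succ i' =>
            exact Submodule.subset_span ⟨a, jle hJ2 hJsucc i' ha, x, hx.1.2, rfl⟩
    · trivial
  let T : Submodule ↥R (ℕ →₀ M) :=
    W (M := M) R Jpow hR1 (fun j => (JMod Jpow j ⊓ N) ⊓ (if j = k + 1 then JN else ⊤)) hstabT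
  have hTS : Nstar ≤ T := by
    rw [← hS]
    apply Submodule.span_le.2
    intro g hg
    have hgN : g ∈ Nstar := by rw [← hS]; exact Submodule.subset_span hg
    refine mem_W.2 fun j => ⟨mem_W.1 hgN j, ?_⟩
    split
    · next hj =>
        have hg0 : g j = 0 := by
          by_contra hne
          have hmem : j ∈ g.support := Finsupp.mem_support_iff.2 hne
          have h1 : g.support.sup id ≤ k :=
            hk ▸ Finset.le_sup (f := fun g : ℕ →₀ M => g.support.sup id) (Finset.mem_coe.1 hg)
          have h2 : j ≤ g.support.sup id := Finset.le_sup (f := id) hmem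
          omega
        rw [hg0]; exact zero_mem _
    · trivial
  intro x hx
  have hx' := Submodule.mem_inf.1 hx
  have hsingle : Finsupp.single (k + 1) x ∈ Nstar := by
    refine mem_W.2 fun j => ?_
    rw [Finsupp.single_apply]
    split
    · next h => exact h ▸ ⟨hx'.1, hx'.2⟩
    · exact ⟨zero_mem _, zero_mem _⟩
  have hT := mem_W.1 (hTS hsingle) (k + 1)
  rw [Finsupp.single_eq_same, if_pos rfl] at hT
  exact hT.2
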